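/- arXiv:1903.10602 — 2 statements merged into one kernel-verified Lean document; each statement's English description precedes it below -/
import Mathlib

section
/- For every even integer l ≥ 4 and every n expressible as a sum of two squares, the number of l-tuples (μ¹,…,μˡ) of lattice points on the circle of radius √n summing to zero is O(N_n^{l-2}), where N_n is the number of such lattice points. -/
/-- The set of lattice points on the circle of radius `√n`. -/
def latticePoints (n : ℕ) : Set (ℤ × ℤ) := {μ | μ.1 ^ 2 + μ.2 ^ 2 = (n : ℤ)}

/-- The length-`l` spectral correlation set `R_l(n)`. -/
def corrSet (l n : ℕ) : Set (Fin l → ℤ × ℤ) :=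
  {f | (∀ j, f j ∈ latticePoints n) ∧ ∑ j, f j = 0}
lemma sq_sum_eq_zero {x y : ℤ} (h : x ^ 2 + y ^ 2 = 0) : x = 0 ∧ y = 0 := by
  have hx : x ^ 2 = 0 := le_antisymm (by nlinarith [sq_nonneg y]) (sq_nonneg x)
  have hy : y ^ 2 = 0 := le_antisymm (by nlinarith [sq_nonneg x]) (sq_nonneg y)
  exact ⟨pow_eq_zero_iff two_ne_zero |>.mp hx, pow_eq_zero_iff two_ne_zero |>.mp hy⟩

/-- Three points on the intersection of two distinct circles of equal radius:
if `a,b,c` all have norm² `n` and `v-a, v-b, v-c` also have norm² `n`, with `v ≠ 0`,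
and `a ≠ b`, `a ≠ c`, then `b = c`. -/
lemma three_pts {v1 v2 a1 a2 b1 b2 c1 c2 n : ℤ}
    (hv : ¬ (v1 = 0 ∧ v2 = 0))
    (ha : a1 ^ 2 + a2 ^ 2 = n) (hb : b1 ^ 2 + b2 ^ 2 = n) (hc : c1 ^ 2 + c2 ^ 2 = n)
    (ha' : (v1 - a1) ^ 2 + (v2 - a2) ^ 2 = n)
    (hb' : (v1 - b1) ^ 2 + (v2 - b2) ^ 2 = n)
    (hc' : (v1 - c1) ^ 2 + (v2 - c2) ^ 2 = n)
    (hab : ¬ (a1 = b1 ∧ a2 = b2)) (hac : ¬ (a1 = c1 ∧ a2 = c2)) :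
    b1 = c1 ∧ b2 = c2 := by
  obtain ⟨s1, rfl⟩ : ∃ s, b1 = a1 + s := ⟨b1 - a1, by ring⟩
  obtain ⟨s2, rfl⟩ : ∃ s, b2 = a2 + s := ⟨b2 - a2, by ring⟩
  obtain ⟨t1, rfl⟩ : ∃ t, c1 = a1 + t := ⟨c1 - a1, by ring⟩
  obtain ⟨t2, rfl⟩ : ∃ t, c2 = a2 + t := ⟨c2 - a2, by ring⟩
  have hs : ¬ (s1 = 0 ∧ s2 = 0) := by
    intro ⟨h1, h2⟩; exact hab ⟨by omega, by omega⟩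
  have ht : ¬ (t1 = 0 ∧ t2 = 0) := by
    intro ⟨h1, h2⟩; exact hac ⟨by omega, by omega⟩
  -- orthogonality to v
  have hvs2 : 2 * (v1 * s1 + v2 * s2) = 0 := by linear_combination ha' - hb' + hb - ha
  have hvt2 : 2 * (v1 * t1 + v2 * t2) = 0 := by linear_combination ha' - hc' + hc - ha
  have hvs : v1 * s1 + v2 * s2 = 0 := by linarith
  have hvt : v1 * t1 + v2 * t2 = 0 := by linarith
  -- s and t are parallel
  have cross : s1 * t2 = s2 * t1 := by
    rcases not_and_or.mp hv with h | h
    · have h1 : v1 * (s1 * t2 - s2 * t1) = 0 := by linear_combination t2 * hvs - s2 * hvt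
      have := (mul_eq_zero.mp h1).resolve_left h
      linarith
    · have h1 : v2 * (s1 * t2 - s2 * t1) = 0 := by linear_combination s1 * hvt - t1 * hvs
      have := (mul_eq_zero.mp h1).resolve_left h
      linarith
  have E1 : 2 * (a1 * s1 + a2 * s2) + (s1 ^ 2 + s2 ^ 2) = 0 := by linear_combination hb - ha
  have E2 : 2 * (a1 * t1 + a2 * t2) + (t1 ^ 2 + t2 ^ 2) = 0 := by linear_combination hc - ha
  have hS0 : s1 ^ 2 + s2 ^ 2 ≠ 0 := fun h => hs (sq_sum_eq_zero h)
  have hT0 : t1 ^ 2 + t2 ^ 2 ≠ 0 := fun h => ht (sq_sum_eq_zero h)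
  have h1 : (s1 ^ 2 + s2 ^ 2) * t1 = (s1 * t1 + s2 * t2) * s1 := by linear_combination (-s2) * cross
  have h2 : (s1 ^ 2 + s2 ^ 2) * t2 = (s1 * t1 + s2 * t2) * s2 := by linear_combination s1 * cross
  have h1' : (t1 ^ 2 + t2 ^ 2) * s1 = (s1 * t1 + s2 * t2) * t1 := by linear_combination t2 * cross
  have h2' : (t1 ^ 2 + t2 ^ 2) * s2 = (s1 * t1 + s2 * t2) * t2 := by linear_combination (-t1) * cross
  have h3 : (s1 ^ 2 + s2 ^ 2) * ((t1 ^ 2 + t2 ^ 2) - (s1 * t1 + s2 * t2)) = 0 := by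
    linear_combination (s1 ^ 2 + s2 ^ 2) * E2 - 2 * a1 * h1 - 2 * a2 * h2 - (s1 * t1 + s2 * t2) * E1
  have h3' : (t1 ^ 2 + t2 ^ 2) * ((s1 ^ 2 + s2 ^ 2) - (s1 * t1 + s2 * t2)) = 0 := by
    linear_combination (t1 ^ 2 + t2 ^ 2) * E1 - 2 * a1 * h1' - 2 * a2 * h2' - (s1 * t1 + s2 * t2) * E2
  have hTD : (t1 ^ 2 + t2 ^ 2) - (s1 * t1 + s2 * t2) = 0 := (mul_eq_zero.mp h3).resolve_left hS0
  have hSD : (s1 ^ 2 + s2 ^ 2) - (s1 * t1 + s2 * t2) = 0 := (mul_eq_zero.mp h3').resolve_left hT0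
  have hst : (s1 - t1) ^ 2 + (s2 - t2) ^ 2 = 0 := by linear_combination hSD + hTD
  obtain ⟨h1, h2⟩ := sq_sum_eq_zero hst
  exact ⟨by omega, by omega⟩

lemma pair_card_le_two (L : Finset (ℤ × ℤ)) (n : ℤ)
    (hL : ∀ μ ∈ L, μ.1 ^ 2 + μ.2 ^ 2 = n) (v : ℤ × ℤ) (hv : v ≠ 0) :
    ((L ×ˢ L).filter (fun p => p.1 + p.2 = v)).card ≤ 2 := by
  by_contra h
  push_neg at h
  obtain ⟨p, q, r, hp, hq, hr, hpq, hpr, hqr⟩ := Finset.two_lt_card_iff.mp h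
  simp only [Finset.mem_filter, Finset.mem_product] at hp hq hr
  obtain ⟨⟨hp1, hp2⟩, hpv⟩ := hp
  obtain ⟨⟨hq1, hq2⟩, hqv⟩ := hq
  obtain ⟨⟨hr1, hr2⟩, hrv⟩ := hr
  have hp2' : p.2 = v - p.1 := by rw [← hpv]; ring
  have hq2' : q.2 = v - q.1 := by rw [← hqv]; ring
  have hr2' : r.2 = v - r.1 := by rw [← hrv]; ring
  have hv' : ¬ (v.1 = 0 ∧ v.2 = 0) := by
    intro ⟨h1, h2⟩; exact hv (Prod.ext h1 h2)
  have key : q.1.1 = r.1.1 ∧ q.1.2 = r.1.2 := by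
    refine three_pts (a1 := p.1.1) (a2 := p.1.2) hv' (hL _ hp1) (hL _ hq1) (hL _ hr1) ?_ ?_ ?_ ?_ ?_
    · have := hL _ hp2; rw [hp2'] at this; exact this
    · have := hL _ hq2; rw [hq2'] at this; exact this
    · have := hL _ hr2; rw [hr2'] at this; exact this
    · intro ⟨h1, h2⟩
      exact hpq (Prod.ext (Prod.ext h1 h2) (by rw [hp2', hq2', Prod.ext h1 h2]))
    · intro ⟨h1, h2⟩
      exact hpr (Prod.ext (Prod.ext h1 h2) (by rw [hp2', hr2', Prod.ext h1 h2]))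
  exact hqr (Prod.ext (Prod.ext key.1 key.2) (by rw [hq2', hr2', Prod.ext key.1 key.2]))

lemma pair_card_le_card (L : Finset (ℤ × ℤ)) :
    ((L ×ˢ L).filter (fun p => p.1 + p.2 = 0)).card ≤ L.card := by
  apply Finset.card_le_card_of_injOn Prod.fst
  · intro p hp
    simp only [Finset.mem_coe, Finset.mem_filter, Finset.mem_product] at hp
    exact hp.1.1
  · intro p hp q hq hfst
    simp only [Finset.coe_filter, Set.mem_setOf_eq, Finset.mem_product] at hp hq
    have : p.2 = q.2 := by
      have h1 := hp.2; have h2 := hq.2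
      rw [← hfst] at h2
      have : p.1 + p.2 = p.1 + q.2 := by rw [h1, h2]
      exact add_left_cancel this
    exact Prod.ext hfst this


/-- For every even `l ≥ 4` there is a constant `C` such that for every `n` (with at least one
lattice point on the circle of radius `√n`), `|R_l(n)| ≤ C · N_n^(l-2)`. -/
theorem corrSet_card_le (l : ℕ) (hl : Even l) (hl4 : 4 ≤ l) :
    ∃ C : ℝ, 0 < C ∧ ∀ n : ℕ, 1 ≤ Nat.card (latticePoints n) →
      (Nat.card (corrSet l n) : ℝ) ≤ C * (Nat.card (latticePoints n) : ℝ) ^ (l - 2) := by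
  classical
  refine ⟨3, by norm_num, ?_⟩
  intro n _
  obtain ⟨m, rfl⟩ : ∃ m, l = m + 2 := ⟨l - 2, by omega⟩
  have hm : 2 ≤ m := by omega
  set L : Finset (ℤ × ℤ) :=
    (Finset.Icc (-(n : ℤ)) (n : ℤ) ×ˢ Finset.Icc (-(n : ℤ)) (n : ℤ)).filter
      (fun μ => μ.1 ^ 2 + μ.2 ^ 2 = (n : ℤ)) with hLdef
  have hmemL : ∀ μ : ℤ × ℤ, μ ∈ L ↔ μ.1 ^ 2 + μ.2 ^ 2 = (n : ℤ) := by
    intro μ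
    simp only [hLdef, Finset.mem_filter, Finset.mem_product, Finset.mem_Icc]
    constructor
    · exact fun h => h.2
    · intro h
      refine ⟨⟨⟨?_, ?_⟩, ?_, ?_⟩, h⟩ <;>
        nlinarith [sq_nonneg (2 * μ.1 + 1), sq_nonneg (2 * μ.1 - 1),
          sq_nonneg (2 * μ.2 + 1), sq_nonneg (2 * μ.2 - 1), sq_nonneg μ.1, sq_nonneg μ.2]
  have hLset : latticePoints n = ↑L := by
    ext μ; simp [latticePoints, hmemL]
  have hN : Nat.card (latticePoints n) = L.card := by
    rw [hLset, Nat.card_coe_set_eq, Set.ncard_coe_finset]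
  set T : Finset (Fin (m + 2) → ℤ × ℤ) :=
    (Fintype.piFinset fun _ : Fin (m + 2) => L).filter (fun f => ∑ j, f j = 0) with hTdef
  have hTcard : Nat.card (corrSet (m + 2) n) = T.card := by
    have hset : corrSet (m + 2) n = ↑T := by
      ext f
      simp only [corrSet, Set.mem_setOf_eq, hTdef, Finset.coe_filter,
        Fintype.mem_piFinset, latticePoints, hmemL]
    rw [hset, Nat.card_coe_set_eq, Set.ncard_coe_finset]
  -- main counting
  set P : Finset (Fin m → ℤ × ℤ) := Fintype.piFinset fun _ : Fin m => L with hPdef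
  set res : (Fin (m + 2) → ℤ × ℤ) → (Fin m → ℤ × ℤ) :=
    fun f i => f (Fin.castSucc (Fin.castSucc i)) with hresdef
  set A : Fin (m + 2) := Fin.castSucc (Fin.last m) with hAdef
  set B : Fin (m + 2) := Fin.last (m + 1) with hBdef
  have hsum : ∀ f : Fin (m + 2) → ℤ × ℤ, ∑ j, f j = (∑ i, res f i) + f A + f B := by
    intro f
    rw [Fin.sum_univ_castSucc (n := m + 1), Fin.sum_univ_castSucc (n := m)]
  have hPcard : P.card = L.card ^ m := by
    simp [hPdef, Fintype.card_piFinset]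
  have hres : ∀ f ∈ T, res f ∈ P := by
    intro f hf
    simp only [hTdef, Finset.mem_filter, Fintype.mem_piFinset] at hf
    exact Fintype.mem_piFinset.mpr fun i => hf.1 _
  have split : T.card = ∑ g ∈ P, (T.filter fun f => res f = g).card :=
    Finset.card_eq_sum_card_fiberwise hres
  have fiber_le : ∀ g ∈ P, (T.filter fun f => res f = g).card ≤
      ((L ×ˢ L).filter fun p => p.1 + p.2 = -(∑ i, g i)).card := by
    intro g hg
    apply Finset.card_le_card_of_injOn (fun f => (f A, f B))
    · intro f hf
      simp only [Finset.mem_coe, Finset.mem_filter] at hf ⊢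
      obtain ⟨hfT, hfg⟩ := hf
      simp only [hTdef, Finset.mem_filter, Fintype.mem_piFinset] at hfT
      refine ⟨Finset.mem_product.mpr ⟨hfT.1 A, hfT.1 B⟩, ?_⟩
      have h0 : (∑ i, g i) + (f A + f B) = 0 := by
        rw [← hfg, ← add_assoc, ← hsum f, hfT.2]
      exact eq_neg_of_add_eq_zero_right h0
    · intro f hf f' hf' heq
      simp only [Finset.coe_filter, Set.mem_setOf_eq] at hf hf'
      have hA : f A = f' A := congrArg Prod.fst heq
      have hB : f B = f' B := congrArg Prod.snd heq
      funext j
      have hj : j.val < m ∨ j.val = m ∨ j.val = m + 1 := by omega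
      rcases hj with hj | hj | hj
      · have hjeq : j = Fin.castSucc (Fin.castSucc ⟨j.val, hj⟩) := by
          apply Fin.ext; simp
        rw [hjeq]
        have := congrFun (hf.2.trans hf'.2.symm) ⟨j.val, hj⟩
        exact this
      · have hjeq : j = A := by apply Fin.ext; simp [hAdef, hj]
        rw [hjeq]; exact hA
      · have hjeq : j = B := by apply Fin.ext; simp [hBdef, hj]
        rw [hjeq]; exact hB
  have pair_le : ∀ g ∈ P, ((L ×ˢ L).filter fun p => p.1 + p.2 = -(∑ i, g i)).card ≤
      (if (∑ i, g i) = 0 then L.card else 2) := by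
    intro g hg
    by_cases h : (∑ i, g i) = 0
    · rw [if_pos h, h, neg_zero]
      exact pair_card_le_card L
    · rw [if_neg h]
      exact pair_card_le_two L (n : ℤ) (fun μ hμ => (hmemL μ).mp hμ) _ (neg_ne_zero.mpr h)
  have hzero : (P.filter fun g => ∑ i, g i = 0).card ≤ L.card ^ (m - 1) := by
    obtain ⟨k, rfl⟩ : ∃ k, m = k + 1 := ⟨m - 1, by omega⟩
    have : k + 1 - 1 = k := by omega
    rw [this]
    have htarget : (Fintype.piFinset fun _ : Fin k => L).card = L.card ^ k := by
      simp [Fintype.card_piFinset]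
    rw [← htarget]
    apply Finset.card_le_card_of_injOn (fun g => fun i : Fin k => g (Fin.castSucc i))
    · intro g hg
      simp only [Finset.mem_coe, Finset.mem_filter, hPdef, Fintype.mem_piFinset] at hg
      exact Fintype.mem_piFinset.mpr fun i => hg.1 _
    · intro g hg g' hg' heq
      simp only [Finset.coe_filter, Set.mem_setOf_eq] at hg hg'
      funext j
      refine Fin.lastCases ?_ ?_ j
      · have h1 : (∑ i : Fin k, g (Fin.castSucc i)) + g (Fin.last k) = 0 := by
          rw [← Fin.sum_univ_castSucc]; exact hg.2
        have h2 : (∑ i : Fin k, g' (Fin.castSucc i)) + g' (Fin.last k) = 0 := by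
          rw [← Fin.sum_univ_castSucc]; exact hg'.2
        have hsums : (∑ i : Fin k, g (Fin.castSucc i)) = ∑ i : Fin k, g' (Fin.castSucc i) := by
          apply Finset.sum_congr rfl
          intro i _
          exact congrFun heq i
        rw [hsums] at h1
        have := h1.trans h2.symm
        exact add_left_cancel this
      · intro i
        exact congrFun heq i
  calc (Nat.card (corrSet (m + 2) n) : ℝ) = (T.card : ℝ) := by rw [hTcard]
    _ ≤ 3 * (L.card : ℝ) ^ m := by
        have hnat : T.card ≤ 3 * L.card ^ m := by
          calc T.card = ∑ g ∈ P, (T.filter fun f => res f = g).card := split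
            _ ≤ ∑ g ∈ P, (if (∑ i, g i) = 0 then L.card else 2) :=
                Finset.sum_le_sum fun g hg => (fiber_le g hg).trans (pair_le g hg)
            _ = ∑ g ∈ P.filter (fun g => ∑ i, g i = 0), L.card
                + ∑ g ∈ P.filter (fun g => ¬ (∑ i, g i = 0)), 2 := Finset.sum_ite _ _
            _ = (P.filter fun g => ∑ i, g i = 0).card * L.card
                + (P.filter fun g => ¬ (∑ i, g i = 0)).card * 2 := by
                rw [Finset.sum_const, Finset.sum_const, smul_eq_mul, smul_eq_mul]
            _ ≤ L.card ^ (m - 1) * L.card + L.card ^ m * 2 :=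
                Nat.add_le_add (Nat.mul_le_mul_right _ hzero)
                  (Nat.mul_le_mul_right _ ((Finset.card_filter_le _ _).trans hPcard.le))
            _ ≤ 3 * L.card ^ m := by
                have hme : m - 1 + 1 = m := Nat.sub_add_cancel (le_trans one_le_two hm)
                have hpow : L.card ^ (m - 1) * L.card = L.card ^ m := by
                  rw [← pow_succ, hme]
                rw [hpow]
                exact le_of_eq (by ring)
        exact_mod_cast hnat
    _ = 3 * (Nat.card (latticePoints n) : ℝ) ^ (m + 2 - 2) := by
        rw [hN]
        norm_num
end

section
/- The greatest common divisor of the first coordinates of all lattice points on the circle of radius √n equals Q_n = 2^{⌊a/2⌋} ∏ q_k^{h_k}, where n = 2^a ∏ p_j^{e_j} ∏ q_k^{2h_k} with p_j ≡ 1 and q_k ≡ 3 mod 4. -/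
/-- The finite set of lattice points on the circle of radius `√n`. -/
noncomputable def latticeSet (n : ℕ) : Finset (ℤ × ℤ) :=
  (Finset.Icc ((-(n : ℤ), -(n : ℤ)) : ℤ × ℤ) (((n : ℤ), (n : ℤ)) : ℤ × ℤ)).filter
    (fun μ => μ.1 ^ 2 + μ.2 ^ 2 = (n : ℤ))

lemma mem_latticeSet {n : ℕ} {x y : ℤ} (hxy : x ^ 2 + y ^ 2 = (n : ℤ)) :
    (x, y) ∈ latticeSet n := by
  have hn0 : (0 : ℤ) ≤ (n : ℤ) := Int.natCast_nonneg n
  have hx2 : x ^ 2 ≤ (n : ℤ) := by nlinarith [sq_nonneg y]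
  have hy2 : y ^ 2 ≤ (n : ℤ) := by nlinarith [sq_nonneg x]
  have hxb : -(n : ℤ) ≤ x ∧ x ≤ (n : ℤ) := by
    constructor <;> nlinarith [sq_nonneg (x - 1), sq_nonneg (x + 1)]
  have hyb : -(n : ℤ) ≤ y ∧ y ≤ (n : ℤ) := by
    constructor <;> nlinarith [sq_nonneg (y - 1), sq_nonneg (y + 1)]
  simp only [latticeSet, Finset.mem_filter, Finset.mem_Icc, Prod.mk_le_mk, Prod.le_def]
  exact ⟨⟨⟨hxb.1, hyb.1⟩, ⟨hxb.2, hyb.2⟩⟩, hxy⟩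

/-- If `4 ∣ x² + y²` then both `x` and `y` are even. -/
lemma two_dvd_of_four_dvd {x y : ℤ} (h : (4 : ℤ) ∣ x ^ 2 + y ^ 2) :
    2 ∣ x ∧ 2 ∣ y := by
  rcases Int.even_or_odd x with hx | hx <;> rcases Int.even_or_odd y with hy | hy
  · exact ⟨hx.two_dvd, hy.two_dvd⟩
  · exfalso
    obtain ⟨k, hk⟩ := hx; obtain ⟨l, hl⟩ := hy
    obtain ⟨K, hK⟩ : ∃ K, x ^ 2 + y ^ 2 = 4 * K + 1 :=
      ⟨k * k + l * l + l, by subst hk hl; ring⟩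
    rw [hK] at h; omega
  · exfalso
    obtain ⟨k, hk⟩ := hx; obtain ⟨l, hl⟩ := hy
    obtain ⟨K, hK⟩ : ∃ K, x ^ 2 + y ^ 2 = 4 * K + 1 :=
      ⟨k * k + k + l * l, by subst hk hl; ring⟩
    rw [hK] at h; omega
  · exfalso
    obtain ⟨k, hk⟩ := hx; obtain ⟨l, hl⟩ := hy
    obtain ⟨K, hK⟩ : ∃ K, x ^ 2 + y ^ 2 = 4 * K + 2 :=
      ⟨k * k + k + l * l + l, by subst hk hl; ring⟩
    rw [hK] at h; omega

/-- If `ℓ ≡ 3 mod 4` is prime and `ℓ ∣ x² + y²` then `ℓ ∣ x` and `ℓ ∣ y`. -/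
lemma dvd_of_prime_three_mod_four {ℓ : ℕ} (hl : ℓ.Prime) (h3 : ℓ % 4 = 3)
    {x y : ℤ} (h : (ℓ : ℤ) ∣ x ^ 2 + y ^ 2) : (ℓ : ℤ) ∣ x ∧ (ℓ : ℤ) ∣ y := by
  haveI := Fact.mk hl
  have hsum : ((x : ZMod ℓ)) ^ 2 + ((y : ZMod ℓ)) ^ 2 = 0 := by
    have := (ZMod.intCast_zmod_eq_zero_iff_dvd _ ℓ).2 h
    push_cast at this
    exact this
  have hx0 : (x : ZMod ℓ) = 0 := by
    by_contra hx0
    have hsq : IsSquare (-1 : ZMod ℓ) := by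
      refine ⟨(y : ZMod ℓ) * ((x : ZMod ℓ))⁻¹, ?_⟩
      have hxinv : (x : ZMod ℓ) * ((x : ZMod ℓ))⁻¹ = 1 := ZMod.mul_inv_of_unit _
        (Ne.isUnit hx0)
      have hy2 : ((y : ZMod ℓ)) ^ 2 = -((x : ZMod ℓ)) ^ 2 := by linear_combination hsum
      field_simp
      linear_combination -hy2
    exact (ZMod.exists_sq_eq_neg_one_iff.mp hsq) h3
  have hy0 : (y : ZMod ℓ) = 0 := by
    have : ((y : ZMod ℓ)) ^ 2 = 0 := by rw [hx0] at hsum; simpa using hsum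
    exact pow_eq_zero_iff (n := 2) (by norm_num) |>.mp this
  exact ⟨(ZMod.intCast_zmod_eq_zero_iff_dvd _ ℓ).1 hx0,
    (ZMod.intCast_zmod_eq_zero_iff_dvd _ ℓ).1 hy0⟩

/-- Key divisibility: for `ℓ = 2` or `ℓ ≡ 3 mod 4` prime, `ℓ^(2m) ∣ x²+y²` implies
`ℓ^m` divides both coordinates. -/
lemma pow_dvd_coords {ℓ : ℕ} (hl : ℓ.Prime) (hc : ℓ = 2 ∨ ℓ % 4 = 3) (m : ℕ) :
    ∀ x y : ℤ, (ℓ : ℤ) ^ (2 * m) ∣ x ^ 2 + y ^ 2 → (ℓ : ℤ) ^ m ∣ x ∧ (ℓ : ℤ) ^ m ∣ y := by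
  induction m with
  | zero => intro x y _; simp
  | succ k ih =>
    intro x y hdvd
    have hsq : ((ℓ : ℤ)) ^ 2 ∣ x ^ 2 + y ^ 2 :=
      dvd_trans (pow_dvd_pow _ (by omega)) hdvd
    have hstep : (ℓ : ℤ) ∣ x ∧ (ℓ : ℤ) ∣ y := by
      rcases hc with h2 | h3
      · subst h2
        exact two_dvd_of_four_dvd (by exact_mod_cast (by norm_num : ((2:ℤ))^2 = 4) ▸ hsq)
      · exact dvd_of_prime_three_mod_four hl h3 (dvd_trans (dvd_pow_self _ (by norm_num)) hsq)
    obtain ⟨x', hx'⟩ := hstep.1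
    obtain ⟨y', hy'⟩ := hstep.2
    have hne : ((ℓ : ℤ)) ^ 2 ≠ 0 := pow_ne_zero _ (by exact_mod_cast hl.ne_zero)
    have hdvd' : (ℓ : ℤ) ^ (2 * k) ∣ x' ^ 2 + y' ^ 2 := by
      have heq : x ^ 2 + y ^ 2 = (ℓ : ℤ) ^ 2 * (x' ^ 2 + y' ^ 2) := by
        subst hx' hy'; ring
      have : (ℓ : ℤ) ^ 2 * (ℓ : ℤ) ^ (2 * k) ∣ (ℓ : ℤ) ^ 2 * (x' ^ 2 + y' ^ 2) := by
        rw [← heq, ← pow_add]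
        exact (pow_dvd_pow _ (by omega)).trans hdvd
      exact (mul_dvd_mul_iff_left hne).mp this
    obtain ⟨hx'', hy''⟩ := ih x' y' hdvd'
    constructor
    · rw [hx', pow_succ, mul_comm ((ℓ:ℤ)^k)]
      exact mul_dvd_mul_left _ hx''
    · rw [hy', pow_succ, mul_comm ((ℓ:ℤ)^k)]
      exact mul_dvd_mul_left _ hy''

/-- Multiplying two primitive representations with coprime norms gives a primitive
representation of the product. -/
lemma prim_mul {x y u v m₁ m₂ : ℤ} (h1 : x ^ 2 + y ^ 2 = m₁) (h2 : u ^ 2 + v ^ 2 = m₂)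
    (g1 : IsCoprime x y) (g2 : IsCoprime u v) (gm : IsCoprime m₁ m₂) :
    ∃ X Y : ℤ, X ^ 2 + Y ^ 2 = m₁ * m₂ ∧ IsCoprime X Y := by
  refine ⟨x * u - y * v, x * v + y * u, by subst h1 h2; ring, ?_⟩
  obtain ⟨a, b, hab⟩ := g1
  obtain ⟨a', b', hab'⟩ := g2
  obtain ⟨c, d, hcd⟩ := gm
  refine ⟨c * (a' * x - b' * y) + d * (a * u - b * v),
         c * (a' * y + b' * x) + d * (a * v + b * u), ?_⟩
  subst h1 h2
  linear_combination c * (x^2 + y^2) * hab' + d * (u^2 + v^2) * hab + hcd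

/-- A prime `p ≡ 1 mod 4` has a primitive representation as a sum of two squares. -/
lemma prim_rep_prime {p : ℕ} (hp : p.Prime) (h1 : p % 4 = 1) :
    ∃ c d : ℤ, c ^ 2 + d ^ 2 = (p : ℤ) ∧ IsCoprime c d := by
  haveI := Fact.mk hp
  obtain ⟨c, d, hcd⟩ := Nat.Prime.sq_add_sq (p := p) (by omega)
  refine ⟨(c : ℤ), (d : ℤ), by exact_mod_cast hcd, ?_⟩
  rw [Int.isCoprime_iff_gcd_eq_one]
  by_contra hg
  set g := Int.gcd (c : ℤ) (d : ℤ) with hgdef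
  have hgc : (g : ℤ) ∣ (c : ℤ) := Int.gcd_dvd_left _ _
  have hgd : (g : ℤ) ∣ (d : ℤ) := Int.gcd_dvd_right _ _
  have hg2 : (g : ℤ) * g ∣ (p : ℤ) := by
    have : (g : ℤ) * g ∣ (c:ℤ)^2 + (d:ℤ)^2 :=
      dvd_add (by exact mul_dvd_mul hgc hgc |>.trans (by rw [sq]))
        (by exact mul_dvd_mul hgd hgd |>.trans (by rw [sq]))
    rwa [show ((c:ℤ)^2 + (d:ℤ)^2) = (p:ℤ) by exact_mod_cast hcd] at this
  have hg2n : g * g ∣ p := by exact_mod_cast hg2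
  have hgp : g ∣ p := (dvd_mul_left g g) |>.trans hg2n
  rcases (Nat.Prime.eq_one_or_self_of_dvd hp g hgp) with h | h
  · exact hg h
  · subst h
    have hle := Nat.le_of_dvd hp.pos hg2n
    nlinarith [hp.two_le]

/-- A power of a prime `p ≡ 1 mod 4` has a primitive representation. -/
lemma prim_rep_prime_pow {p : ℕ} (hp : p.Prime) (h1 : p % 4 = 1) (e : ℕ) :
    ∃ x y : ℤ, x ^ 2 + y ^ 2 = (p : ℤ) ^ e ∧ IsCoprime x y := by
  induction e with
  | zero => exact ⟨1, 0, by norm_num, isCoprime_one_left⟩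
  | succ k ih =>
    obtain ⟨x, y, hxy, hco⟩ := ih
    obtain ⟨c, d, hcd, hcdco⟩ := prim_rep_prime hp h1
    -- two candidate products
    set X₁ := x * c - y * d with hX₁
    set Y₁ := x * d + y * c with hY₁
    set X₂ := x * c + y * d with hX₂
    set Y₂ := x * d - y * c with hY₂
    have hn1 : X₁ ^ 2 + Y₁ ^ 2 = (p : ℤ) ^ (k + 1) := by
      rw [hX₁, hY₁]; linear_combination (c^2 + d^2) * hxy + ((p:ℤ))^k * hcd
    have hn2 : X₂ ^ 2 + Y₂ ^ 2 = (p : ℤ) ^ (k + 1) := by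
      rw [hX₂, hY₂]; linear_combination (c^2 + d^2) * hxy + ((p:ℤ))^k * hcd
    -- if a pair is not coprime then p divides both entries
    have key : ∀ X Y : ℤ, X ^ 2 + Y ^ 2 = (p : ℤ) ^ (k + 1) → ¬ IsCoprime X Y →
        (p : ℤ) ∣ X ∧ (p : ℤ) ∣ Y := by
      intro X Y hXY hnc
      have hgne : Int.gcd X Y ≠ 1 := fun h => hnc (Int.isCoprime_iff_gcd_eq_one.mpr h)
      have hgne0 : Int.gcd X Y ≠ 0 := by
        intro h0
        obtain ⟨hX0, hY0⟩ := Int.gcd_eq_zero_iff.mp h0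
        rw [hX0, hY0] at hXY
        simp at hXY
        exact pow_ne_zero (k+1) (show (p:ℤ) ≠ 0 by exact_mod_cast hp.ne_zero) hXY.symm
      obtain ⟨ℓ, hℓp, hℓdvd⟩ := Nat.exists_prime_and_dvd hgne
      have hlX : (ℓ : ℤ) ∣ X := (Int.natCast_dvd_natCast.mpr hℓdvd).trans (Int.gcd_dvd_left _ _)
      have hlY : (ℓ : ℤ) ∣ Y := (Int.natCast_dvd_natCast.mpr hℓdvd).trans (Int.gcd_dvd_right _ _)
      have hlX2 : (ℓ : ℤ) ∣ X ^ 2 := by rw [sq]; exact hlX.mul_right X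
      have hlY2 : (ℓ : ℤ) ∣ Y ^ 2 := by rw [sq]; exact hlY.mul_right Y
      have hlpow : (ℓ : ℤ) ∣ (p : ℤ) ^ (k + 1) := by
        rw [← hXY]; exact dvd_add hlX2 hlY2
      have hlp : ℓ = p := by
        have hdp : (ℓ : ℕ) ∣ p ^ (k + 1) := by exact_mod_cast hlpow
        exact (Nat.prime_dvd_prime_iff_eq hℓp hp).mp (hℓp.dvd_of_dvd_pow hdp)
      subst hlp
      exact ⟨hlX, hlY⟩
    by_cases hc1 : IsCoprime X₁ Y₁
    · exact ⟨X₁, Y₁, hn1, hc1⟩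
    by_cases hc2 : IsCoprime X₂ Y₂
    · exact ⟨X₂, Y₂, hn2, hc2⟩
    exfalso
    obtain ⟨hd1X, hd1Y⟩ := key X₁ Y₁ hn1 hc1
    obtain ⟨hd2X, hd2Y⟩ := key X₂ Y₂ hn2 hc2
    have hp2 : ¬ ((p:ℤ) ∣ 2) := by
      intro hh
      have hnat : p ∣ 2 := by exact_mod_cast hh
      have := Nat.le_of_dvd (by norm_num) hnat
      have := hp.two_le
      omega
    -- p divides 2xc, 2xd, 2yc, 2yd
    have h2xc : (p:ℤ) ∣ 2 * (x * c) := by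
      have : X₁ + X₂ = 2 * (x * c) := by rw [hX₁, hX₂]; ring
      rw [← this]; exact dvd_add hd1X hd2X
    have h2yd : (p:ℤ) ∣ 2 * (y * d) := by
      have : X₂ - X₁ = 2 * (y * d) := by rw [hX₁, hX₂]; ring
      rw [← this]; exact dvd_sub hd2X hd1X
    have h2xd : (p:ℤ) ∣ 2 * (x * d) := by
      have : Y₁ + Y₂ = 2 * (x * d) := by rw [hY₁, hY₂]; ring
      rw [← this]; exact dvd_add hd1Y hd2Y
    have h2yc : (p:ℤ) ∣ 2 * (y * c) := by
      have : Y₁ - Y₂ = 2 * (y * c) := by rw [hY₁, hY₂]; ring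
      rw [← this]; exact dvd_sub hd1Y hd2Y
    have hpprime : Prime (p : ℤ) := Int.prime_iff_natAbs_prime.mpr (by simpa using hp)
    have hxc : (p:ℤ) ∣ x * c := ((hpprime.dvd_mul.mp h2xc).resolve_left hp2)
    have hxd : (p:ℤ) ∣ x * d := ((hpprime.dvd_mul.mp h2xd).resolve_left hp2)
    have hyc : (p:ℤ) ∣ y * c := ((hpprime.dvd_mul.mp h2yc).resolve_left hp2)
    have hyd : (p:ℤ) ∣ y * d := ((hpprime.dvd_mul.mp h2yd).resolve_left hp2)
    -- p cannot divide both c and d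
    have hpc_or : ¬ ((p:ℤ) ∣ c ∧ (p:ℤ) ∣ d) := by
      rintro ⟨hc, hd⟩
      exact hpprime.not_unit (hcdco.isUnit_of_dvd' hc hd)
    -- then p ∣ x and p ∣ y
    have hpx : (p:ℤ) ∣ x ∧ (p:ℤ) ∣ y := by
      rcases hpprime.dvd_mul.mp hxc with h | h
      · rcases hpprime.dvd_mul.mp hyd with h' | h'
        · exact ⟨h, h'⟩
        · rcases hpprime.dvd_mul.mp hyc with h'' | h''
          · exact ⟨h, h''⟩
          · exact absurd ⟨h'', h'⟩ hpc_or
      · rcases hpprime.dvd_mul.mp hxd with h' | h'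
        · rcases hpprime.dvd_mul.mp hyd with h'' | h''
          · exact ⟨h', h''⟩
          · exact absurd ⟨h, h''⟩ hpc_or
        · exact absurd ⟨h, h'⟩ hpc_or
    exact hpprime.not_unit (hco.isUnit_of_dvd' hpx.1 hpx.2)

/-- Any positive integer not divisible by 4 and with no prime factor `≡ 3 mod 4`
has a primitive representation as a sum of two squares. -/
lemma prim_rep : ∀ m : ℕ, 0 < m → ¬ (4 ∣ m) →
    (∀ ℓ : ℕ, ℓ.Prime → ℓ ∣ m → ℓ % 4 ≠ 3) →
    ∃ x y : ℤ, x ^ 2 + y ^ 2 = (m : ℤ) ∧ IsCoprime x y := by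
  intro m
  induction m using Nat.strong_induction_on with
  | _ m ih =>
    intro hm h4 h3
    by_cases hm1 : m = 1
    · exact ⟨1, 0, by simp [hm1], isCoprime_one_left⟩
    obtain ⟨ℓ, hℓp, hℓd⟩ := Nat.exists_prime_and_dvd hm1
    have hmeq : ℓ ^ m.factorization ℓ * (m / ℓ ^ m.factorization ℓ) = m :=
      Nat.ordProj_mul_ordCompl_eq_self m ℓ
    set e := m.factorization ℓ with he_def
    set m' := m / ℓ ^ e with hm'_def
    have he : 1 ≤ e := hℓp.factorization_pos_of_dvd hm.ne' hℓd
    have hndvd : ¬ ℓ ∣ m' := Nat.not_dvd_ordCompl hℓp hm.ne'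
    have hm'pos : 0 < m' := Nat.ordCompl_pos ℓ hm.ne'
    have hm'dvd : m' ∣ m := Nat.ordCompl_dvd m ℓ
    have hm'lt : m' < m := by
      have h2ℓ := hℓp.two_le
      have hle : ℓ ≤ ℓ ^ e := Nat.le_self_pow (by omega) ℓ
      nlinarith [hm'pos]
    have h4' : ¬ (4 ∣ m') := fun hd => h4 (hd.trans hm'dvd)
    have h3' : ∀ ℓ' : ℕ, ℓ'.Prime → ℓ' ∣ m' → ℓ' % 4 ≠ 3 :=
      fun ℓ' hp' hd' => h3 ℓ' hp' (hd'.trans hm'dvd)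
    obtain ⟨u, v, huv, hcuv⟩ := ih m' hm'lt hm'pos h4' h3'
    have hrep : ∃ x y : ℤ, x ^ 2 + y ^ 2 = ((ℓ ^ e : ℕ) : ℤ) ∧ IsCoprime x y := by
      by_cases hl2 : ℓ = 2
      · subst hl2
        have he1 : e = 1 := by
          by_contra hne
          have he2 : 2 ≤ e := by omega
          exact h4 (dvd_trans (by
            calc (4:ℕ) = 2 ^ 2 := by norm_num
            _ ∣ 2 ^ e := pow_dvd_pow 2 he2) ⟨m', hmeq.symm⟩)
        exact ⟨1, 1, by rw [he1]; norm_num, isCoprime_one_left⟩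
      · have hodd : ℓ % 2 = 1 := Nat.odd_iff.mp (hℓp.odd_of_ne_two hl2)
        have h3ℓ : ℓ % 4 ≠ 3 := h3 ℓ hℓp hℓd
        have h1ℓ : ℓ % 4 = 1 := by omega
        obtain ⟨x, y, hxy, hc⟩ := prim_rep_prime_pow hℓp h1ℓ e
        exact ⟨x, y, by rw [hxy]; push_cast; ring, hc⟩
    obtain ⟨x, y, hxy, hcxy⟩ := hrep
    have hcop : IsCoprime ((ℓ ^ e : ℕ) : ℤ) ((m' : ℕ) : ℤ) :=
      Nat.isCoprime_iff_coprime.mpr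
        (Nat.Coprime.pow_left e ((Nat.Prime.coprime_iff_not_dvd hℓp).mpr hndvd))
    obtain ⟨X, Y, hXY, hc⟩ := prim_mul hxy huv hcxy hcuv hcop
    refine ⟨X, Y, ?_, hc⟩
    rw [hXY, ← hmeq]; push_cast; ring

/-- For `n = 2^a · ∏ p_j^{e_j} · ∏ q_k^{2 h_k}` a sum of two squares (`p_j ≡ 1`, `q_k ≡ 3`
mod 4 primes), the gcd of the nonzero first coordinates of the lattice points on the circle
of radius `√n` equals `Q_n = 2^⌊a/2⌋ · ∏ q_k^{h_k}`. -/
theorem gcd_first_coords_eq_Qn (n a s r : ℕ) (p e : Fin s → ℕ) (q h : Fin r → ℕ)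
    (hp : ∀ j, (p j).Prime) (hp1 : ∀ j, p j % 4 = 1) (hpinj : Function.Injective p)
    (hq : ∀ k, (q k).Prime) (hq3 : ∀ k, q k % 4 = 3) (hqinj : Function.Injective q)
    (hn : n = 2 ^ a * (∏ j, p j ^ e j) * ∏ k, q k ^ (2 * h k)) :
    Finset.gcd ((latticeSet n).filter (fun μ => μ.1 ≠ 0)) (fun μ => μ.1.natAbs) =
      2 ^ (a / 2) * ∏ k, q k ^ h k := by
  classical
  set Q : ℕ := 2 ^ (a / 2) * ∏ k, q k ^ h k with hQdef
  set m : ℕ := 2 ^ (a % 2) * ∏ j, p j ^ e j with hmdef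
  have hQpos : 0 < Q := by
    apply Nat.mul_pos (pow_pos (by norm_num) _)
    exact Finset.prod_pos fun k _ => pow_pos (hq k).pos _
  have hmpos : 0 < m := by
    apply Nat.mul_pos (pow_pos (by norm_num) _)
    exact Finset.prod_pos fun j _ => pow_pos (hp j).pos _
  have hnQm : n = Q ^ 2 * m := by
    have hq2 : ∏ k, q k ^ (2 * h k) = (∏ k, q k ^ h k) ^ 2 := by
      rw [← Finset.prod_pow]
      exact Finset.prod_congr rfl fun k _ => by rw [← pow_mul, mul_comm]
    have h2a : (2:ℕ) ^ a = 2 ^ (a / 2) * 2 ^ (a / 2) * 2 ^ (a % 2) := by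
      rw [← pow_add, ← pow_add]; congr 1; omega
    rw [hn, hq2, h2a, hQdef, hmdef]; ring
  set S := (latticeSet n).filter (fun μ => μ.1 ≠ 0) with hSdef
  -- Lower bound: Q divides every first coordinate.
  have lower : ∀ μ ∈ S, Q ∣ μ.1.natAbs := by
    intro μ hμ
    rw [hSdef, Finset.mem_filter] at hμ
    obtain ⟨hμlat, hμne⟩ := hμ
    rw [latticeSet, Finset.mem_filter] at hμlat
    have hcirc : μ.1 ^ 2 + μ.2 ^ 2 = (n : ℤ) := hμlat.2
    have h2dvd : ((2:ℤ)) ^ (a / 2) ∣ μ.1 := by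
      have hnd : (2:ℕ) ^ (2 * (a / 2)) ∣ n := by
        rw [hn]
        exact dvd_mul_of_dvd_left (dvd_mul_of_dvd_left (pow_dvd_pow 2 (by omega)) _) _
      have : ((2:ℤ)) ^ (2 * (a / 2)) ∣ μ.1 ^ 2 + μ.2 ^ 2 := by
        rw [hcirc]; exact_mod_cast Int.natCast_dvd_natCast.mpr hnd
      exact (pow_dvd_coords Nat.prime_two (Or.inl rfl) (a / 2) μ.1 μ.2 this).1
    have hqdvd : ∀ k, ((q k : ℤ)) ^ (h k) ∣ μ.1 := by
      intro k
      have hnd : (q k) ^ (2 * h k) ∣ n := by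
        rw [hn]
        exact dvd_mul_of_dvd_right (Finset.dvd_prod_of_mem _ (Finset.mem_univ k)) _
      have : ((q k : ℤ)) ^ (2 * h k) ∣ μ.1 ^ 2 + μ.2 ^ 2 := by
        rw [hcirc]; exact_mod_cast Int.natCast_dvd_natCast.mpr hnd
      exact (pow_dvd_coords (hq k) (Or.inr (hq3 k)) (h k) μ.1 μ.2 this).1
    have hprod : (∏ k, ((q k : ℤ)) ^ (h k)) ∣ μ.1 := by
      apply Finset.prod_dvd_of_coprime
      · intro k _ k' _ hne
        have hqq : Nat.Coprime (q k ^ h k) (q k' ^ h k') :=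
          Nat.Coprime.pow _ _ ((Nat.coprime_primes (hq k) (hq k')).mpr
            (fun heq => hne (hqinj heq)))
        have := Nat.isCoprime_iff_coprime.mpr hqq
        simpa using this
      · exact fun k _ => hqdvd k
    have hcop2 : IsCoprime ((2:ℤ) ^ (a / 2)) (∏ k, ((q k : ℤ)) ^ (h k)) := by
      have hqq : Nat.Coprime (2 ^ (a / 2)) (∏ k, q k ^ h k) := by
        apply Nat.Coprime.prod_right
        intro k _
        refine Nat.Coprime.pow _ _ ((Nat.coprime_primes Nat.prime_two (hq k)).mpr ?_)
        intro heq
        have := hq3 k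
        omega
      have := Nat.isCoprime_iff_coprime.mpr hqq
      simpa using this
    have hQint : ((Q : ℕ) : ℤ) ∣ μ.1 := by
      have := hcop2.mul_dvd h2dvd hprod
      rw [hQdef]; push_cast
      exact this
    have := Int.natAbs_dvd_natAbs.mpr hQint
    simpa using this
  -- Upper bound: a primitive representation of m gives points pinning the gcd to Q.
  have h2ndvd : ¬ (2 ∣ ∏ j, p j ^ e j) := by
    intro hdvd
    obtain ⟨j, _, hj⟩ := (Nat.prime_two.prime.dvd_finset_prod_iff _).mp hdvd
    have h2p : 2 ∣ p j := Nat.Prime.dvd_of_dvd_pow Nat.prime_two hj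
    have := (Nat.prime_dvd_prime_iff_eq Nat.prime_two (hp j)).mp h2p
    have := hp1 j
    omega
  have h4m : ¬ (4 ∣ m) := by
    intro hdvd
    have ha2 : a % 2 = 0 ∨ a % 2 = 1 := by omega
    rcases ha2 with h0 | h1
    · rw [hmdef, h0, pow_zero, one_mul] at hdvd
      exact h2ndvd (dvd_trans (by norm_num) hdvd)
    · rw [hmdef, h1, pow_one] at hdvd
      obtain ⟨t, ht⟩ := hdvd
      exact h2ndvd ⟨t, by omega⟩
  have h3m : ∀ ℓ : ℕ, ℓ.Prime → ℓ ∣ m → ℓ % 4 ≠ 3 := by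
    intro ℓ hℓ hdvd h3
    rw [hmdef] at hdvd
    rcases (Nat.Prime.dvd_mul hℓ).mp hdvd with hd | hd
    · have := Nat.Prime.dvd_of_dvd_pow hℓ hd
      have := (Nat.prime_dvd_prime_iff_eq hℓ Nat.prime_two).mp this
      omega
    · obtain ⟨j, _, hj⟩ := (hℓ.prime).dvd_finset_prod_iff _ |>.mp hd
      have := (Nat.prime_dvd_prime_iff_eq hℓ (hp j)).mp (Nat.Prime.dvd_of_dvd_pow hℓ hj)
      have := hp1 j
      omega
  obtain ⟨x, y, hxy, hco⟩ := prim_rep m hmpos h4m h3m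
  have hQ0 : ((Q : ℕ) : ℤ) ≠ 0 := by exact_mod_cast hQpos.ne'
  have hcirc1 : ((Q : ℤ) * x) ^ 2 + ((Q : ℤ) * y) ^ 2 = (n : ℤ) := by
    rw [hnQm]; push_cast; linear_combination ((Q:ℕ):ℤ) ^ 2 * hxy
  have hcirc2 : ((Q : ℤ) * y) ^ 2 + ((Q : ℤ) * x) ^ 2 = (n : ℤ) := by
    linear_combination hcirc1
  have hgx : Int.gcd x y = 1 := Int.isCoprime_iff_gcd_eq_one.mp hco
  have hgcd_dvd : ∀ z w : ℤ, z ^ 2 + w ^ 2 = (n : ℤ) → z ≠ 0 →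
      Finset.gcd S (fun μ => μ.1.natAbs) ∣ z.natAbs := by
    intro z w hzw hz
    have hmem : (z, w) ∈ S := by
      rw [hSdef, Finset.mem_filter]
      exact ⟨mem_latticeSet hzw, hz⟩
    exact Finset.gcd_dvd hmem
  have upper : Finset.gcd S (fun μ => μ.1.natAbs) ∣ Q := by
    by_cases hx0 : x = 0
    · have hy1 : y.natAbs = 1 := by
        rw [Int.gcd, hx0] at hgx
        simpa using hgx
      have hy0 : y ≠ 0 := fun hy => by simp [hy] at hy1
      have hne : (Q : ℤ) * y ≠ 0 := mul_ne_zero hQ0 hy0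
      have := hgcd_dvd _ _ hcirc2 hne
      rwa [Int.natAbs_mul, Int.natAbs_natCast, hy1, mul_one] at this
    by_cases hy0 : y = 0
    · have hx1 : x.natAbs = 1 := by
        rw [Int.gcd, hy0] at hgx
        simpa using hgx
      have hne : (Q : ℤ) * x ≠ 0 := mul_ne_zero hQ0 hx0
      have := hgcd_dvd _ _ hcirc1 hne
      rwa [Int.natAbs_mul, Int.natAbs_natCast, hx1, mul_one] at this
    · have hnex : (Q : ℤ) * x ≠ 0 := mul_ne_zero hQ0 hx0
      have hney : (Q : ℤ) * y ≠ 0 := mul_ne_zero hQ0 hy0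
      have hdx := hgcd_dvd _ _ hcirc1 hnex
      have hdy := hgcd_dvd _ _ hcirc2 hney
      rw [Int.natAbs_mul, Int.natAbs_natCast] at hdx hdy
      have := Nat.dvd_gcd hdx hdy
      rwa [Nat.gcd_mul_left, show Nat.gcd x.natAbs y.natAbs = 1 from hgx, mul_one] at this
  exact Nat.dvd_antisymm upper (Finset.dvd_gcd lower)
end
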